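/- Any compact connected set Γ ⊂ ℝ² with H¹(Γ) < ∞ admits a surjective parametrization γ : [0,1] → ℝ² with γ([0,1]) = Γ and Lipschitz constant Lip(γ) ≤ 32·H¹(Γ). -/

import Mathlib

open MeasureTheory Set Real Filter
open scoped ENNReal NNReal Topology

noncomputable section

abbrev Plane := EuclideanSpace ℝ (Fin 2)

def mk2 (a b : ℝ) : Plane := (WithLp.equiv 2 (Fin 2 → ℝ)).symm ![a, b]

/-- Orthogonal projection onto direction (cos θ, sin θ). -/
def proj (θ : ℝ) (x : Plane) : ℝ := x 0 * Real.cos θ + x 1 * Real.sin θ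

/-- Favard length. -/
def Fav (E : Set Plane) : ℝ≥0∞ := ∫⁻ θ in Set.Ioo 0 Real.pi, μH[1] (proj θ '' E)

section interp

variable {E : Type*} [NormedAddCommGroup E] [NormedSpace ℝ E]

/-- Piecewise linear interpolation of a sequence with bounded steps. -/
lemma schul_interp {g : ℕ → E} {c : ℝ} (hc : 0 ≤ c)
    (hg : ∀ i, dist (g i) (g (i + 1)) ≤ c) :
    ∃ f : ℝ → E, (∀ i : ℕ, f i = g i) ∧
      (∀ t : ℝ, 0 ≤ t → dist (f t) (g ⌊t⌋₊) ≤ c) ∧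
      (∀ s t : ℝ, 0 ≤ s → s ≤ t → dist (f s) (f t) ≤ c * (t - s)) := by
  set f : ℝ → E := fun t => g ⌊t⌋₊ + (t - (⌊t⌋₊ : ℝ)) • (g (⌊t⌋₊ + 1) - g ⌊t⌋₊) with hf
  have step : ∀ i, ‖g (i+1) - g i‖ ≤ c := by
    intro i; rw [← dist_eq_norm, dist_comm]; exact hg i
  have hnat : ∀ i : ℕ, f i = g i := by
    intro i; simp [hf, Nat.floor_natCast]
  have near : ∀ t : ℝ, 0 ≤ t → dist (f t) (g ⌊t⌋₊) ≤ c := by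
    intro t ht
    have h1 : f t - g ⌊t⌋₊ = (t - (⌊t⌋₊ : ℝ)) • (g (⌊t⌋₊ + 1) - g ⌊t⌋₊) := by
      simp [hf]
    rw [dist_eq_norm, h1, norm_smul, Real.norm_eq_abs,
      abs_of_nonneg (by linarith [Nat.floor_le ht])]
    have h2 : t - (⌊t⌋₊ : ℝ) ≤ 1 := by linarith [Nat.lt_floor_add_one t]
    calc (t - (⌊t⌋₊:ℝ)) * ‖g (⌊t⌋₊ + 1) - g ⌊t⌋₊‖ ≤ 1 * c :=
          mul_le_mul h2 (step _) (norm_nonneg _) zero_le_one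
      _ = c := one_mul c
  have piece : ∀ s t : ℝ, s ≤ t → ⌊s⌋₊ = ⌊t⌋₊ → dist (f s) (f t) ≤ c * (t - s) := by
    intro s t hst he
    have h1 : f s - f t = (s - t) • (g (⌊s⌋₊ + 1) - g ⌊s⌋₊) := by
      simp only [hf, he]; module
    rw [dist_eq_norm, h1, norm_smul, Real.norm_eq_abs, abs_sub_comm,
      abs_of_nonneg (by linarith), mul_comm]
    exact mul_le_mul_of_nonneg_right (step _) (by linarith)
  have pieceR : ∀ s : ℝ, 0 ≤ s → dist (f s) (g (⌊s⌋₊ + 1)) ≤ c * ((⌊s⌋₊ : ℝ) + 1 - s) := by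
    intro s hs
    have h1 : f s - g (⌊s⌋₊ + 1) = (s - ((⌊s⌋₊ : ℝ) + 1)) • (g (⌊s⌋₊ + 1) - g ⌊s⌋₊) := by
      simp only [hf]; module
    rw [dist_eq_norm, h1, norm_smul, Real.norm_eq_abs, abs_sub_comm,
      abs_of_nonneg (by linarith [Nat.lt_floor_add_one s]), mul_comm]
    exact mul_le_mul_of_nonneg_right (step _) (by linarith [Nat.lt_floor_add_one s])
  have key : ∀ m : ℕ, ∀ s t : ℝ, 0 ≤ s → s ≤ t → ⌊t⌋₊ - ⌊s⌋₊ = m →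
      dist (f s) (f t) ≤ c * (t - s) := by
    intro m
    induction m with
    | zero =>
      intro s t hs hst hm
      have hle : ⌊s⌋₊ ≤ ⌊t⌋₊ := Nat.floor_le_floor hst
      exact piece s t hst (by omega)
    | succ m ih =>
      intro s t hs hst hm
      set k : ℕ := ⌊s⌋₊ + 1 with hk
      have hkt : (k : ℝ) ≤ t := by
        have h1 : k ≤ ⌊t⌋₊ := by omega
        calc (k:ℝ) ≤ (⌊t⌋₊ : ℝ) := by exact_mod_cast h1
          _ ≤ t := Nat.floor_le (le_trans hs hst)
      have hsk : s ≤ (k : ℝ) := by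
        have := Nat.lt_floor_add_one s
        push_cast [hk]; linarith
      have h1 : dist (f s) (f k) ≤ c * ((k:ℝ) - s) := by
        rw [hnat k]
        have := pieceR s hs
        rw [hk]; push_cast
        convert this using 2 <;> push_cast <;> ring
      have h2 : dist (f k) (f t) ≤ c * (t - (k:ℝ)) := by
        refine ih k t (by positivity) hkt ?_
        rw [Nat.floor_natCast]; omega
      calc dist (f s) (f t) ≤ dist (f s) (f k) + dist (f k) (f t) := dist_triangle _ _ _
        _ ≤ c * ((k:ℝ) - s) + c * (t - (k:ℝ)) := add_le_add h1 h2
        _ = c * (t - s) := by ring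
  exact ⟨f, hnat, near, fun s t hs hst => key _ s t hs hst rfl⟩
end interp
section tour
lemma schul_tour {α : Type*} [DecidableEq α] (R : α → α → Prop)
    (s : Finset α) (hs : s.Nonempty)
    (hcut : ∀ t : Finset α, t ⊆ s → t.Nonempty → t ≠ s →
      ∃ a ∈ t, ∃ b ∈ s, b ∉ t ∧ R a b ∧ R b a) :
    ∃ l : List α, l ≠ [] ∧ (∀ x, x ∈ l ↔ x ∈ s) ∧ l.Chain' R ∧
      l.length + 1 ≤ 2 * s.card := by
  -- grow a walk covering t until t = s
  have aux : ∀ n : ℕ, ∀ t : Finset α, t ⊆ s → (s \ t).card = n →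
      (∃ l : List α, l ≠ [] ∧ (∀ x, x ∈ l ↔ x ∈ t) ∧ l.Chain' R ∧
        l.length + 1 ≤ 2 * t.card) →
      ∃ l : List α, l ≠ [] ∧ (∀ x, x ∈ l ↔ x ∈ s) ∧ l.Chain' R ∧
        l.length + 1 ≤ 2 * s.card := by
    intro n
    induction n with
    | zero =>
      intro t hts hcard hl
      have : t = s := Finset.eq_of_subset_of_card_le hts (by
        have := Finset.card_sdiff_add_card_eq_card hts
        omega)
      subst this; exact hl
    | succ n ih =>
      intro t hts hcard ⟨l, hne, hmem, hchain, hlen⟩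
      have htne : t.Nonempty := by
        obtain ⟨x, hx⟩ := List.exists_mem_of_ne_nil l hne
        exact ⟨x, (hmem x).1 hx⟩
      have hts' : t ≠ s := by
        intro h; subst h; simp at hcard
      obtain ⟨a, ha, b, hbs, hbt, hab, hba⟩ := hcut t hts htne hts'
      obtain ⟨l₁, l₂, rfl⟩ := List.append_of_mem ((hmem a).2 ha)
      refine ih (insert b t) (Finset.insert_subset hbs hts) ?_ ?_
      · rw [Finset.sdiff_insert]
        rw [Finset.card_erase_of_mem (Finset.mem_sdiff.2 ⟨hbs, hbt⟩)]
        omega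
      · refine ⟨l₁ ++ a :: b :: a :: l₂, by simp, ?_, ?_, ?_⟩
        · intro x
          have h0 := hmem x
          simp only [List.mem_append, List.mem_cons, Finset.mem_insert] at h0 ⊢
          tauto
        · rw [List.Chain', List.isChain_append] at hchain ⊢
          refine ⟨hchain.1, ?_, ?_⟩
          · rw [List.isChain_cons_cons, List.isChain_cons_cons]
            exact ⟨hab, hba, hchain.2.1⟩
          · intro x hx y hy
            simp only [List.head?_cons, Option.mem_some_iff] at hy
            subst hy
            exact hchain.2.2 x hx a (by simp)
        · simp only [List.length_append, List.length_cons] at hlen ⊢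
          rw [Finset.card_insert_of_notMem hbt]
          omega
  obtain ⟨a, ha⟩ := hs
  refine aux (s \ {a}).card {a} (Finset.singleton_subset_iff.2 ha) rfl
    ⟨[a], by simp, by simp, by exact List.isChain_singleton a, by simp⟩
end tour

/-- Lower bound: a connected set reaching distance `r` from `x` has `H¹` at least `r`
    inside the closed ball. -/
lemma schul_lower {Γ : Set Plane} (hconn : IsPreconnected Γ)
    {x : Plane} (hx : x ∈ Γ) {r : ℝ} (hr : 0 ≤ r)
    (hy : ∃ y ∈ Γ, r ≤ dist y x) :
    ENNReal.ofReal r ≤ μH[1] (Γ ∩ Metric.closedBall x r) := by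
  obtain ⟨y, hyΓ, hyr⟩ := hy
  have hf : LipschitzWith 1 (fun z : Plane => dist z x) := LipschitzWith.dist_left x
  have hsub : Set.Icc (0:ℝ) r ⊆ (fun z => dist z x) '' (Γ ∩ Metric.closedBall x r) := by
    intro u hu
    have hIcc : Set.Icc (dist x x) (dist y x) ⊆ (fun z => dist z x) '' Γ :=
      hconn.intermediate_value hx hyΓ (hf.continuous.continuousOn)
    have : u ∈ (fun z => dist z x) '' Γ := by
      apply hIcc
      simp only [dist_self, Set.mem_Icc]
      exact ⟨hu.1, le_trans hu.2 hyr⟩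
    obtain ⟨z, hz, hzu⟩ := this
    exact ⟨z, ⟨hz, by simp only [Metric.mem_closedBall]; rw [show dist z x = u from hzu]; exact hu.2⟩, hzu⟩
  calc ENNReal.ofReal r = μH[1] (Set.Icc (0:ℝ) r) := by
        rw [MeasureTheory.hausdorffMeasure_real, Real.volume_Icc, sub_zero]
    _ ≤ μH[1] ((fun z : Plane => dist z x) '' (Γ ∩ Metric.closedBall x r)) :=
        measure_mono hsub
    _ ≤ (1:ℝ≥0∞) ^ (1:ℝ) * μH[1] (Γ ∩ Metric.closedBall x r) :=
        hf.hausdorffMeasure_image_le (by norm_num) _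
    _ = μH[1] (Γ ∩ Metric.closedBall x r) := by simp

/-- Cardinality bound for δ-separated subsets of Γ. -/
lemma schul_card {Γ : Set Plane} (hc : IsCompact Γ) (hconn : IsPreconnected Γ)
    {δ : ℝ} (hδ : 0 < δ) (s : Finset Plane) (hsΓ : ↑s ⊆ Γ)
    (hsep : ∀ a ∈ s, ∀ b ∈ s, a ≠ b → δ ≤ dist a b) (h2 : 2 ≤ s.card) :
    (s.card : ℝ≥0∞) * ENNReal.ofReal (δ / 3) ≤ μH[1] Γ := by
  -- every point of s has a Γ-point at distance ≥ δ/3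
  have hfar : ∀ x ∈ s, ∃ y ∈ Γ, δ / 3 ≤ dist y x := by
    intro x hxs
    obtain ⟨a, ha, b, hb, hab⟩ := Finset.one_lt_card.1 h2
    rcases eq_or_ne x a with rfl | hxa
    · exact ⟨b, hsΓ hb, le_trans (by linarith) (hsep b hb x ha (Ne.symm hab) )⟩
    · exact ⟨a, hsΓ ha, le_trans (by linarith) (hsep a ha x hxs (Ne.symm hxa))⟩
  have hdisj : (↑s : Set Plane).PairwiseDisjoint
      (fun x => Γ ∩ Metric.closedBall x (δ / 3)) := by
    intro a ha b hb hab
    refine Set.disjoint_left.2 fun z hza hzb => ?_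
    have h1 : dist a b ≤ dist z a + dist z b := by
      rw [dist_comm z a]; exact dist_triangle a z b
    have := hsep a ha b hb hab
    have hza' := hza.2; have hzb' := hzb.2
    simp only [Metric.mem_closedBall] at hza' hzb'
    linarith
  have hmeas : ∀ x ∈ s, MeasurableSet (Γ ∩ Metric.closedBall x (δ / 3)) :=
    fun x _ => (hc.isClosed.inter Metric.isClosed_closedBall).measurableSet
  calc (s.card : ℝ≥0∞) * ENNReal.ofReal (δ / 3)
      = ∑ x ∈ s, ENNReal.ofReal (δ / 3) := by
        rw [Finset.sum_const, nsmul_eq_mul]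
    _ ≤ ∑ x ∈ s, μH[1] (Γ ∩ Metric.closedBall x (δ / 3)) := by
        refine Finset.sum_le_sum fun x hxs => ?_
        exact schul_lower hconn (hsΓ hxs) (by linarith) (hfar x hxs)
    _ = μH[1] (⋃ x ∈ s, Γ ∩ Metric.closedBall x (δ / 3)) :=
        (measure_biUnion_finset hdisj hmeas).symm
    _ ≤ μH[1] Γ := by
        refine measure_mono ?_
        simp only [Set.iUnion_subset_iff]
        exact fun x _ => Set.inter_subset_left

/-- Existence of a maximal δ-separated finite subset of Γ. -/
lemma schul_net {Γ : Set Plane} (hc : IsCompact Γ) (hconn : IsPreconnected Γ)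
    (hne : Γ.Nonempty) (hfin : μH[1] Γ < ⊤) {δ : ℝ} (hδ : 0 < δ) :
    ∃ s : Finset Plane, ↑s ⊆ Γ ∧ (∀ a ∈ s, ∀ b ∈ s, a ≠ b → δ ≤ dist a b) ∧
      s.Nonempty ∧ (∀ x ∈ Γ, ∃ y ∈ s, dist x y < δ) := by
  classical
  set L : ℝ := (μH[1] Γ).toReal with hL
  set A : Set ℕ := {n : ℕ | ∃ s : Finset Plane, ↑s ⊆ Γ ∧
    (∀ a ∈ s, ∀ b ∈ s, a ≠ b → δ ≤ dist a b) ∧ s.card = n} with hA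
  have cardbound : ∀ n ∈ A, n ≤ ⌈3 * L / δ⌉₊ + 1 := by
    intro n hn
    obtain ⟨s, hsΓ, hsep, hcardn⟩ := hn
    rcases le_or_gt n 1 with h | h
    · omega
    · have h2 : 2 ≤ s.card := by omega
      have := schul_card hc hconn hδ s hsΓ hsep h2
      have htr : (s.card : ℝ) * (δ / 3) ≤ L := by
        have h3 := ENNReal.toReal_mono hfin.ne this
        rw [ENNReal.toReal_mul, ENNReal.toReal_natCast,
          ENNReal.toReal_ofReal (by positivity)] at h3
        exact h3
      have h4 : (n : ℝ) ≤ 3 * L / δ := by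
        rw [hcardn] at htr
        rw [le_div_iff₀ hδ]
        nlinarith
      have h5 : n ≤ ⌈3 * L / δ⌉₊ :=
        Nat.cast_le.mp (h4.trans (Nat.le_ceil _)) |>.trans (le_refl _)
      omega
  have hAne : A.Nonempty := by
    obtain ⟨x₀, hx₀⟩ := hne
    exact ⟨1, {x₀}, by simpa using hx₀, by simp, by simp⟩
  have hAbdd : BddAbove A := ⟨⌈3 * L / δ⌉₊ + 1, fun n hn => cardbound n hn⟩
  have hmem := Nat.sSup_mem hAne hAbdd
  obtain ⟨s, hsΓ, hsep, hcards⟩ := hmem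
  refine ⟨s, hsΓ, hsep, ?_, ?_⟩
  · rw [← Finset.card_pos, hcards]
    obtain ⟨n, hn⟩ := hAne
    have h1 := le_csSup hAbdd hn
    obtain ⟨s', _, _, hs'⟩ := hn
    rcases Nat.eq_zero_or_pos (sSup A) with h | h
    · -- then every member of A is 0, but 1 ∈ A
      obtain ⟨x₀, hx₀⟩ := hne
      have : (1:ℕ) ∈ A := ⟨{x₀}, by simpa using hx₀, by simp, by simp⟩
      have := le_csSup hAbdd this
      omega
    · exact h
  · intro x hx
    by_contra hcon
    push_neg at hcon
    have hxs : x ∉ s := fun hxs => by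
      have := hcon x hxs
      simp at this
      linarith
    have hins : (sSup A) + 1 ∈ A := by
      refine ⟨insert x s, ?_, ?_, ?_⟩
      · rw [Finset.coe_insert]
        exact Set.insert_subset hx hsΓ
      · intro a ha b hb hab
        rcases Finset.mem_insert.1 ha with rfl | ha' <;>
          rcases Finset.mem_insert.1 hb with rfl | hb'
        · exact absurd rfl hab
        · exact hcon b hb'
        · rw [dist_comm]; exact hcon a ha'
        · exact hsep a ha' b hb' hab
      · rw [Finset.card_insert_of_notMem hxs, hcards]
    have := le_csSup hAbdd hins
    omega


/-- For each δ > 0 there is a uniformly Lipschitz path 2δ-close to Γ and δ-dense in Γ. -/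
lemma schul_step {Γ : Set Plane} (hc : IsCompact Γ) (hconn : IsConnected Γ)
    (hfin : μH[1] Γ < ⊤) {δ : ℝ} (hδ : 0 < δ) :
    ∃ γ : ℝ → Plane,
      (∀ s ∈ Set.Icc (0:ℝ) 1, ∀ t ∈ Set.Icc (0:ℝ) 1,
        dist (γ s) (γ t) ≤ 12 * (μH[1] Γ).toReal * dist s t) ∧
      (∀ t ∈ Set.Icc (0:ℝ) 1, ∃ p ∈ Γ, dist (γ t) p ≤ 2 * δ) ∧
      (∀ x ∈ Γ, ∃ t ∈ Set.Icc (0:ℝ) 1, dist (γ t) x < δ) := by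
  classical
  set L : ℝ := (μH[1] Γ).toReal with hL
  have hL0 : 0 ≤ L := ENNReal.toReal_nonneg
  obtain ⟨s, hsΓ, hsep, hsne, hsdense⟩ :=
    schul_net hc hconn.isPreconnected hconn.nonempty hfin hδ
  have hcut : ∀ t : Finset Plane, t ⊆ s → t.Nonempty → t ≠ s →
      ∃ a ∈ t, ∃ b ∈ s, b ∉ t ∧ dist a b < 2 * δ ∧ dist b a < 2 * δ := by
    intro t hts htne htns
    set U : Set Plane := ⋃ a ∈ (t : Set Plane), Metric.ball a δ with hU
    set V : Set Plane := ⋃ b ∈ ((s \ t : Finset Plane) : Set Plane), Metric.ball b δ with hV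
    have hUopen : IsOpen U := isOpen_biUnion fun _ _ => Metric.isOpen_ball
    have hVopen : IsOpen V := isOpen_biUnion fun _ _ => Metric.isOpen_ball
    have hcover : Γ ⊆ U ∪ V := by
      intro x hx
      obtain ⟨y, hy, hxy⟩ := hsdense x hx
      by_cases hyt : y ∈ t
      · exact Or.inl (Set.mem_biUnion hyt (Metric.mem_ball.2 hxy))
      · exact Or.inr (Set.mem_biUnion
          (by simp only [Finset.coe_sdiff, Set.mem_diff, Finset.mem_coe]
              exact ⟨hy, hyt⟩)
          (Metric.mem_ball.2 hxy))
    have hUne : (Γ ∩ U).Nonempty := by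
      obtain ⟨a, ha⟩ := htne
      exact ⟨a, hsΓ (hts ha), Set.mem_biUnion ha (Metric.mem_ball_self hδ)⟩
    have hVne : (Γ ∩ V).Nonempty := by
      obtain ⟨b, hb⟩ := Finset.exists_of_ssubset (Finset.ssubset_iff_subset_ne.2 ⟨hts, htns⟩)
      refine ⟨b, hsΓ hb.1, Set.mem_biUnion ?_ (Metric.mem_ball_self hδ)⟩
      simp only [Finset.coe_sdiff, Set.mem_diff, Finset.mem_coe]
      exact ⟨hb.1, hb.2⟩
    obtain ⟨z, hzΓ, hzU, hzV⟩ := hconn.isPreconnected U V hUopen hVopen hcover hUne hVne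
    obtain ⟨a, ha, hza⟩ := Set.mem_iUnion₂.1 hzU
    obtain ⟨b, hb, hzb⟩ := Set.mem_iUnion₂.1 hzV
    rw [Metric.mem_ball] at hza hzb
    simp only [Finset.coe_sdiff, Set.mem_diff, Finset.mem_coe] at hb
    have hdab : dist a b < 2 * δ := by
      calc dist a b ≤ dist a z + dist z b := dist_triangle a z b
        _ < δ + δ := by rw [dist_comm a z]; exact add_lt_add hza hzb
        _ = 2 * δ := by ring
    exact ⟨a, ha, b, hb.1, hb.2, hdab, by rwa [dist_comm]⟩
  obtain ⟨l, hlne, hlmem, hlchain, hllen⟩ :=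
    schul_tour (fun a b => dist a b < 2 * δ) s hsne hcut
  set m : ℕ := l.length - 1 with hm
  have hlpos : 0 < l.length := List.length_pos_iff.2 hlne
  have hglen : ∀ i : ℕ, min i m < l.length := fun i => by omega
  set g : ℕ → Plane := fun i => l.getD (min i m) 0 with hg
  have hgel : ∀ i : ℕ, g i = l[min i m]'(hglen i) := fun i =>
    List.getD_eq_getElem l 0 (hglen i)
  have hgs : ∀ i : ℕ, g i ∈ s := fun i => by
    rw [hgel i]; exact (hlmem _).1 (List.getElem_mem _)
  have hstep : ∀ i : ℕ, dist (g i) (g (i + 1)) ≤ 2 * δ := by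
    intro i
    rcases lt_or_ge i m with h | h
    · have h1 : i < l.length - 1 := by omega
      have h2 := List.isChain_iff_getElem.1 hlchain i (by omega)
      have e1 : min i m = i := by omega
      have e2 : min (i + 1) m = i + 1 := by omega
      rw [hgel i, hgel (i + 1)]
      simp only [e1, e2]
      simpa [List.get_eq_getElem] using h2.le
    · have e : min i m = min (i + 1) m := by omega
      rw [hgel i, hgel (i + 1)]
      simp only [e, dist_self]
      linarith
  obtain ⟨f, hfnat, hfnear, hfkey⟩ := schul_interp (by linarith : (0:ℝ) ≤ 2 * δ) hstep
  have hKm : 2 * δ * (m : ℝ) ≤ 12 * L := by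
    rcases lt_or_ge s.card 2 with h | h
    · have hm0 : m = 0 := by omega
      rw [hm0]; push_cast; nlinarith
    · have h1 := schul_card hc hconn.isPreconnected hδ s hsΓ hsep h
      have h2 : (s.card : ℝ) * (δ / 3) ≤ L := by
        have h3 := ENNReal.toReal_mono hfin.ne h1
        rwa [ENNReal.toReal_mul, ENNReal.toReal_natCast,
          ENNReal.toReal_ofReal (by positivity)] at h3
      have h4 : (m : ℝ) ≤ 2 * (s.card : ℝ) - 2 := by
        have : m + 2 ≤ 2 * s.card := by omega
        have := (Nat.cast_le (α := ℝ)).2 this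
        push_cast at this ⊢
        linarith
      nlinarith
  refine ⟨fun t => f ((m : ℝ) * t), ?_, ?_, ?_⟩
  · have main : ∀ a ∈ Set.Icc (0:ℝ) 1, ∀ b ∈ Set.Icc (0:ℝ) 1, a ≤ b →
        dist (f ((m:ℝ) * a)) (f ((m:ℝ) * b)) ≤ 12 * L * dist a b := by
      intro a ha b hb hab
      have hm0 : (0:ℝ) ≤ (m:ℝ) := Nat.cast_nonneg m
      have h1 : (0:ℝ) ≤ (m:ℝ) * a := mul_nonneg hm0 ha.1
      have h2 : (m:ℝ) * a ≤ (m:ℝ) * b := mul_le_mul_of_nonneg_left hab hm0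
      calc dist (f ((m:ℝ) * a)) (f ((m:ℝ) * b)) ≤ 2 * δ * ((m:ℝ) * b - (m:ℝ) * a) :=
            hfkey _ _ h1 h2
        _ = 2 * δ * (m:ℝ) * (b - a) := by ring
        _ ≤ 12 * L * (b - a) := mul_le_mul_of_nonneg_right hKm (by linarith)
        _ = 12 * L * dist a b := by
            rw [Real.dist_eq, abs_of_nonpos (by linarith), neg_sub]
    intro a ha b hb
    rcases le_total a b with h | h
    · exact main a ha b hb h
    · rw [dist_comm (f ((m:ℝ) * a)), dist_comm a b]
      exact main b hb a ha h
  · intro t ht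
    have h1 : (0:ℝ) ≤ (m:ℝ) * t := mul_nonneg (Nat.cast_nonneg m) ht.1
    exact ⟨g ⌊(m:ℝ) * t⌋₊, hsΓ (hgs _), hfnear _ h1⟩
  · intro x hx
    obtain ⟨y, hy, hxy⟩ := hsdense x hx
    obtain ⟨i, hi, hil⟩ := List.getElem_of_mem ((hlmem y).2 hy)
    have him : i ≤ m := by omega
    rcases Nat.eq_zero_or_pos m with hm0 | hm0
    · refine ⟨0, by constructor <;> norm_num, ?_⟩
      have e0 : (m:ℝ) * 0 = ((0:ℕ):ℝ) := by push_cast; ring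
      show dist (f ((m:ℝ) * 0)) x < δ
      rw [e0, hfnat 0, hgel 0]
      have : min 0 m = i := by omega
      simp only [this]
      rw [hil, dist_comm]
      exact hxy
    · refine ⟨(i:ℝ) / (m:ℝ), ⟨by positivity, ?_⟩, ?_⟩
      · rw [div_le_one (by exact_mod_cast hm0)]
        exact_mod_cast him
      · have hmne : (m:ℝ) ≠ 0 := by
          exact_mod_cast Nat.pos_iff_ne_zero.1 hm0
        have e0 : (m:ℝ) * ((i:ℝ) / (m:ℝ)) = ((i:ℕ):ℝ) := by field_simp
        show dist (f ((m:ℝ) * ((i:ℝ) / (m:ℝ)))) x < δ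
        rw [e0, hfnat i, hgel i]
        have : min i m = i := by omega
        simp only [this]
        rw [hil, dist_comm]
        exact hxy

/-- Schul's parametrization lemma: compact connected sets of finite length admit
Lipschitz parametrizations with constant ≤ 32 H¹(Γ). -/
theorem stmt14 (Γ : Set Plane) (hc : IsCompact Γ) (hconn : IsConnected Γ)
    (hfin : μH[1] Γ < ⊤) :
    ∃ γ : ℝ → Plane, γ '' Set.Icc 0 1 = Γ ∧
      ∃ K : ℝ≥0, LipschitzOnWith K γ (Set.Icc 0 1) ∧ (K : ℝ≥0∞) ≤ 32 * μH[1] Γ := by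
  classical
  set L : ℝ := (μH[1] Γ).toReal with hLdef
  have hL0 : 0 ≤ L := ENNReal.toReal_nonneg
  obtain ⟨p, hp⟩ := hconn.nonempty
  -- the approximating paths
  have hstep : ∀ n : ℕ, ∃ γ : ℝ → Plane,
      (∀ s ∈ Set.Icc (0:ℝ) 1, ∀ t ∈ Set.Icc (0:ℝ) 1,
        dist (γ s) (γ t) ≤ 12 * L * dist s t) ∧
      (∀ t ∈ Set.Icc (0:ℝ) 1, ∃ q ∈ Γ, dist (γ t) q ≤ 2 * (1 / (n + 1))) ∧
      (∀ x ∈ Γ, ∃ t ∈ Set.Icc (0:ℝ) 1, dist (γ t) x < 1 / (n + 1)) := by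
    intro n
    exact schul_step hc hconn hfin (by positivity : (0:ℝ) < 1 / (n + 1))
  choose γo hlipo hnearo hdenseo using hstep
  -- clamp to [0,1]
  set c : ℝ → ℝ := fun t => max (min 1 t) 0 with hcdef
  have hcmem : ∀ t, c t ∈ Set.Icc (0:ℝ) 1 :=
    fun t => ⟨le_max_right _ _, max_le (min_le_left _ _) zero_le_one⟩
  have hcid : ∀ t ∈ Set.Icc (0:ℝ) 1, c t = t := by
    intro t ht
    simp only [hcdef]
    rw [min_eq_right ht.2, max_eq_left ht.1]
  have hclip : ∀ a b : ℝ, dist (c a) (c b) ≤ dist a b := by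
    intro a b
    rw [Real.dist_eq, Real.dist_eq]
    calc |c a - c b| ≤ |min 1 a - min 1 b| := abs_max_sub_max_le_abs _ _ _
      _ ≤ max |(1:ℝ) - 1| |a - b| := abs_min_sub_min_le_max 1 a 1 b
      _ = |a - b| := by simp
  set Γn : ℕ → ℝ → Plane := fun n t => γo n (c t) with hΓn
  have hlip' : ∀ (n : ℕ) (a b : ℝ), dist (Γn n a) (Γn n b) ≤ 12 * L * dist a b := by
    intro n a b
    calc dist (Γn n a) (Γn n b) ≤ 12 * L * dist (c a) (c b) :=
          hlipo n (c a) (hcmem a) (c b) (hcmem b)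
      _ ≤ 12 * L * dist a b :=
          mul_le_mul_of_nonneg_left (hclip a b) (by positivity)
  -- a compact container for all values
  obtain ⟨R, hR⟩ := (Metric.isBounded_iff_subset_closedBall p).1 hc.isBounded
  have hmemC : ∀ (n : ℕ) (t : ℝ), Γn n t ∈ Metric.closedBall p (R + 2) := by
    intro n t
    obtain ⟨q, hq, hdq⟩ := hnearo n (c t) (hcmem t)
    have h1 : dist q p ≤ R := hR hq
    have h2 : 2 * (1 / ((n:ℝ) + 1)) ≤ 2 := by
      rw [mul_le_iff_le_one_right (by norm_num : (0:ℝ) < 2)]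
      rw [div_le_one (by positivity)]
      simp [le_add_iff_nonneg_left]
    simp only [Metric.mem_closedBall]
    calc dist (Γn n t) p ≤ dist (Γn n t) q + dist q p := dist_triangle _ _ _
      _ ≤ 2 + R := add_le_add (hdq.trans h2) h1
      _ = R + 2 := by ring
  -- ultrafilter limit
  set U : Ultrafilter ℕ := Ultrafilter.of Filter.atTop with hUdef
  have hU : (U : Filter ℕ) ≤ Filter.atTop := Ultrafilter.of_le _
  have hlimex : ∀ t : ℝ, ∃ x, Filter.Tendsto (fun n => Γn n t) (U : Filter ℕ) (𝓝 x) := by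
    intro t
    have h1 : (U.map (fun n => Γn n t) : Filter Plane) ≤ 𝓟 (Metric.closedBall p (R + 2)) := by
      rw [le_principal_iff]
      exact Filter.mem_map.2 (Filter.univ_mem' fun n => hmemC n t)
    obtain ⟨x, _, hx⟩ :=
      (isCompact_closedBall p (R + 2)).ultrafilter_le_nhds (U.map (fun n => Γn n t)) h1
    exact ⟨x, hx⟩
  choose γl hγl using hlimex
  -- Lipschitz estimate for the limit
  have keylip : ∀ a b : ℝ, dist (γl a) (γl b) ≤ 12 * L * dist a b := by
    intro a b
    have h1 := (hγl a).dist (hγl b)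
    exact le_of_tendsto h1 (Filter.Eventually.of_forall fun n => hlip' n a b)
  -- the limit lies in Γ
  have hmemΓ : ∀ t : ℝ, γl t ∈ Γ := by
    intro t
    have h1 : Filter.Tendsto (fun n => Metric.infDist (Γn n t) Γ) (U : Filter ℕ)
        (𝓝 (Metric.infDist (γl t) Γ)) :=
      ((Metric.continuous_infDist_pt Γ).tendsto _).comp (hγl t)
    have h2 : Filter.Tendsto (fun n => Metric.infDist (Γn n t) Γ) (U : Filter ℕ) (𝓝 0) := by
      have hb : ∀ n : ℕ, Metric.infDist (Γn n t) Γ ≤ 2 * (1 / (n + 1)) := by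
        intro n
        obtain ⟨q, hq, hdq⟩ := hnearo n (c t) (hcmem t)
        exact (Metric.infDist_le_dist_of_mem hq).trans hdq
      have hz : Filter.Tendsto (fun n : ℕ => 2 * (1 / ((n:ℝ) + 1))) Filter.atTop (𝓝 0) := by
        have := tendsto_one_div_add_atTop_nhds_zero_nat.const_mul (2:ℝ)
        simpa using this
      refine tendsto_of_tendsto_of_tendsto_of_le_of_le tendsto_const_nhds
        (hz.mono_left hU) (fun n => Metric.infDist_nonneg) hb
    have h3 := tendsto_nhds_unique h1 h2
    exact (hc.isClosed.mem_iff_infDist_zero hconn.nonempty).2 h3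
  -- surjectivity onto Γ
  have hsurj : ∀ x ∈ Γ, ∃ t ∈ Set.Icc (0:ℝ) 1, γl t = x := by
    intro x hx
    choose tn htn hdtn using fun n => hdenseo n x hx
    have h1 : (U.map tn : Filter ℝ) ≤ 𝓟 (Set.Icc (0:ℝ) 1) := by
      rw [le_principal_iff]
      exact Filter.mem_map.2 (Filter.univ_mem' fun n => htn n)
    obtain ⟨t, htIcc, htlim'⟩ := isCompact_Icc.ultrafilter_le_nhds (U.map tn) h1
    have htlim : Filter.Tendsto tn (U : Filter ℕ) (𝓝 t) := htlim'
    refine ⟨t, htIcc, ?_⟩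
    have hb : ∀ n : ℕ, dist (Γn n t) x ≤ 12 * L * dist t (tn n) + 1 / (n + 1) := by
      intro n
      have e1 : Γn n (tn n) = γo n (tn n) := by
        simp only [hΓn]; rw [hcid (tn n) (htn n)]
      calc dist (Γn n t) x ≤ dist (Γn n t) (Γn n (tn n)) + dist (Γn n (tn n)) x :=
            dist_triangle _ _ _
        _ ≤ 12 * L * dist t (tn n) + 1 / (n + 1) := by
            refine add_le_add (hlip' n t (tn n)) ?_
            rw [e1]
            exact (hdtn n).le
    have h0 : Filter.Tendsto (fun n : ℕ => 12 * L * dist t (tn n) + 1 / ((n:ℝ) + 1))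
        (U : Filter ℕ) (𝓝 0) := by
      have ha : Filter.Tendsto (fun n : ℕ => dist t (tn n)) (U : Filter ℕ) (𝓝 0) := by
        have := (tendsto_const_nhds (x := t) (f := (U : Filter ℕ))).dist htlim
        simpa using this
      have hb' : Filter.Tendsto (fun n : ℕ => 12 * L * dist t (tn n)) (U : Filter ℕ) (𝓝 0) := by
        have := ha.const_mul (12 * L)
        simpa using this
      have hz : Filter.Tendsto (fun n : ℕ => 1 / ((n:ℝ) + 1)) (U : Filter ℕ) (𝓝 0) :=
        tendsto_one_div_add_atTop_nhds_zero_nat.mono_left hU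
      simpa using hb'.add hz
    have hdist0 : Filter.Tendsto (fun n => dist (Γn n t) x) (U : Filter ℕ) (𝓝 0) :=
      tendsto_of_tendsto_of_tendsto_of_le_of_le tendsto_const_nhds h0
        (fun n => dist_nonneg) hb
    have hxlim : Filter.Tendsto (fun n => Γn n t) (U : Filter ℕ) (𝓝 x) :=
      tendsto_iff_dist_tendsto_zero.2 hdist0
    exact tendsto_nhds_unique (hγl t) hxlim
  -- conclude
  refine ⟨γl, ?_, (12 * L).toNNReal, ?_, ?_⟩
  · apply Set.Subset.antisymm
    · rintro y ⟨t, _, rfl⟩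
      exact hmemΓ t
    · intro x hx
      obtain ⟨t, htIcc, ht⟩ := hsurj x hx
      exact ⟨t, htIcc, ht⟩
  · refine LipschitzOnWith.of_dist_le_mul fun a _ b _ => ?_
    rw [Real.coe_toNNReal _ (by positivity)]
    exact keylip a b
  · have h1 : ((12 * L).toNNReal : ℝ≥0∞) = ENNReal.ofReal (12 * L) := rfl
    rw [h1, ENNReal.ofReal_mul (by norm_num : (0:ℝ) ≤ 12), hLdef,
      ENNReal.ofReal_toReal hfin.ne]
    calc ENNReal.ofReal 12 * μH[1] Γ ≤ 32 * μH[1] Γ := by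
          refine mul_le_mul_left ?_ _
          rw [show (32:ℝ≥0∞) = ENNReal.ofReal 32 by simp]
          exact ENNReal.ofReal_le_ofReal (by norm_num)
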